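/- Let T > 0 and let z : [0,T] → ℝ be continuous with z₀ ≥ 0. Define y_t = max_{s ∈ [0,t]} (z_s)⁻, where x⁻ = max(0, −x), and x_t = z_t + y_t. Then the pair (x, y) solves the Skorokhod problem for z: x_t ≥ 0 for all t ∈ [0,T]; y₀ = 0, y is continuous and nondecreasing; and ∫₀ᵗ x_s dy_s = 0 for all t ∈ [0,T], where the integral is with respect to the Lebesgue–Stieltjes measure of y. -/

import Mathlib

open MeasureTheory Set Filter Topology

noncomputable section

/-- `∫₀ᵗ x_s dy_s = 0` for all `t ∈ [0,T]`, where the integral is taken with respect to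
the Lebesgue–Stieltjes measure of (any Stieltjes extension of) the nondecreasing
function `y` on `[0,T]`, extended by `0` to the left of `0` and by `y T` to the
right of `T`. -/
def StieltjesIntegralZero (T : ℝ) (x y : ℝ → ℝ) : Prop :=
  ∀ Y : StieltjesFunction ℝ,
    (∀ t : ℝ, t ≤ 0 → Y t = 0) → (∀ t ∈ Set.Icc 0 T, Y t = y t) →
    (∀ t : ℝ, T ≤ t → Y t = y T) →
    ∀ t ∈ Set.Icc 0 T, ∫ s in Set.Icc (0 : ℝ) t, x s ∂Y.measure = 0

/-- The explicit Skorokhod map: `y_t = max_{s ∈ [0,t]} (z_s)⁻` and `x_t = z_t + y_t`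
solve the Skorokhod problem for `z`. -/
theorem skorokhod_map_solves
    (T : ℝ) (hT : 0 < T) (z : ℝ → ℝ)
    (hz_cont : ContinuousOn z (Set.Icc 0 T)) (hz0 : 0 ≤ z 0)
    (y x : ℝ → ℝ)
    (hy : ∀ t : ℝ, y t = sSup ((fun s => max 0 (-z s)) '' Set.Icc 0 t))
    (hx : ∀ t : ℝ, x t = z t + y t) :
    (∀ t ∈ Set.Icc 0 T, 0 ≤ x t) ∧
    y 0 = 0 ∧ ContinuousOn y (Set.Icc 0 T) ∧ MonotoneOn y (Set.Icc 0 T) ∧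
    StieltjesIntegralZero T x y := by
  set f : ℝ → ℝ := fun s => max 0 (-z s) with hf
  have hf_cont : ContinuousOn f (Icc 0 T) := continuousOn_const.sup hz_cont.neg
  have hf0 : f 0 = 0 := by
    simp only [hf]
    exact max_eq_left (neg_nonpos.mpr hz0)
  have hf_nonneg : ∀ s, 0 ≤ f s := fun s => le_max_left _ _
  have hbdd : ∀ t ∈ Icc (0:ℝ) T, BddAbove (f '' Icc 0 t) := by
    intro t ht
    exact (isCompact_Icc.image_of_continuousOn
      (hf_cont.mono (Icc_subset_Icc le_rfl ht.2))).bddAbove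
  -- every value of `f` on `[0,t]` is below `y t`
  have hmem : ∀ t ∈ Icc (0:ℝ) T, ∀ s ∈ Icc (0:ℝ) t, f s ≤ y t := by
    intro t ht s hs
    rw [hy]
    exact le_csSup (hbdd t ht) ⟨s, hs, rfl⟩
  have hmono : MonotoneOn y (Icc 0 T) := by
    intro a ha b hb hab
    rw [hy, hy]
    refine csSup_le_csSup (hbdd b hb) ⟨f 0, ⟨0, ⟨le_rfl, ha.1⟩, rfl⟩⟩
      (image_mono (Icc_subset_Icc le_rfl hab))
  have hy0 : y 0 = 0 := by
    rw [hy, Icc_self, image_singleton, csSup_singleton, hf0]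
  have hy_nonneg : ∀ t ∈ Icc (0:ℝ) T, 0 ≤ y t := by
    intro t ht
    have := hmem t ht 0 ⟨le_rfl, ht.1⟩
    rw [hf0] at this; exact this
  -- `y t` is attained as maximum of `f` on `[0,t]`
  have hattain : ∀ t ∈ Icc (0:ℝ) T, ∃ s ∈ Icc (0:ℝ) t, y t = f s := by
    intro t ht
    obtain ⟨s, hs, hmax⟩ := isCompact_Icc.exists_isMaxOn (nonempty_Icc.2 ht.1)
      (hf_cont.mono (Icc_subset_Icc le_rfl ht.2))
    refine ⟨s, hs, ?_⟩
    rw [hy]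
    exact IsGreatest.csSup_eq ⟨⟨s, hs, rfl⟩, by
      rintro w ⟨u, hu, rfl⟩; exact hmax hu⟩
  -- nonnegativity of x
  have hx_nonneg : ∀ t ∈ Icc (0:ℝ) T, 0 ≤ x t := by
    intro t ht
    have h1 : -z t ≤ f t := le_max_right _ _
    have h2 : f t ≤ y t := hmem t ht t ⟨ht.1, le_rfl⟩
    rw [hx]; linarith
  -- continuity of y
  have huc := Metric.uniformContinuousOn_iff.1
    (isCompact_Icc.uniformContinuousOn_of_continuous hf_cont)
  have hy_cont : ContinuousOn y (Icc 0 T) := by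
    rw [Metric.continuousOn_iff]
    intro b hb ε hε
    obtain ⟨δ, hδ, hδ'⟩ := huc (ε/2) (by linarith)
    refine ⟨δ, hδ, fun a ha hab => ?_⟩
    -- key: if u,v ∈ [0,T], v ≤ u, |u - v| < δ then y u ≤ y v + ε/2
    have key : ∀ v ∈ Icc (0:ℝ) T, ∀ u ∈ Icc (0:ℝ) T, v ≤ u → dist u v < δ →
        y u ≤ y v + ε/2 := by
      intro v hv u hu hvu hd
      rw [hy u]
      refine csSup_le ⟨f 0, ⟨0, ⟨le_rfl, hu.1⟩, rfl⟩⟩ ?_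
      rintro w ⟨s, hs, rfl⟩
      rcases le_or_gt s v with h | h
      · have := hmem v hv s ⟨hs.1, h⟩; linarith
      · have hsT : s ∈ Icc (0:ℝ) T := ⟨hs.1, hs.2.trans hu.2⟩
        have hdsv : dist s v < δ := by
          rw [Real.dist_eq] at hd ⊢
          rw [abs_of_pos (by linarith)]
          rw [abs_of_nonneg (by linarith)] at hd
          linarith [hs.2]
        have := hδ' s hsT v hv hdsv
        rw [Real.dist_eq] at this
        have h2 := hmem v hv v ⟨hv.1, le_rfl⟩
        have := abs_lt.1 this
        linarith [this.2]
    rcases le_total a b with h | h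
    · have h1 := key a ha b hb h (by rwa [dist_comm] at hab)
      have h2 := hmono ha hb h
      rw [Real.dist_eq, abs_of_nonpos (by linarith)]
      linarith
    · have h1 := key b hb a ha h hab
      have h2 := hmono hb ha h
      rw [Real.dist_eq, abs_of_nonneg (by linarith)]
      linarith
  -- constancy of y on intervals where x > 0
  have hconst : ∀ a ∈ Icc (0:ℝ) T, ∀ b ∈ Icc (0:ℝ) T, a ≤ b →
      (∀ s ∈ Icc a b, 0 < x s) → y a = y b := by
    intro a ha b hb hab hpos
    refine le_antisymm (hmono ha hb hab) ?_
    obtain ⟨s, hs, hsy⟩ := hattain b hb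
    rcases le_or_gt s a with h | h
    · rw [hsy]; exact hmem a ha s ⟨hs.1, h⟩
    · -- a < s ≤ b
      have hsT : s ∈ Icc (0:ℝ) T := ⟨hs.1, hs.2.trans hb.2⟩
      have hys : y s = f s := by
        refine le_antisymm ?_ (hmem s hsT s ⟨hs.1, le_rfl⟩)
        have := hmono hsT hb hs.2
        rw [hsy] at this; exact this
      rcases le_or_gt (f s) 0 with h0 | h0
      · rw [hsy]; exact h0.trans (hy_nonneg a ha)
      · exfalso
        have hfz : f s = -z s := by
          rcases max_choice 0 (-z s) with h1 | h1
          · rw [hf] at h0 ⊢; simp only at h0 ⊢; rw [h1] at h0; linarith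
          · exact h1
        have := hpos s ⟨h.le, hs.2⟩
        rw [hx, hys, hfz] at this
        linarith
  refine ⟨hx_nonneg, hy0, hy_cont, hmono, ?_⟩
  -- the Stieltjes integral condition
  intro Y hY0 hYy hYT t ht
  set μ := Y.measure with hμ
  -- left limits of Y agree with Y on [0,T]
  have hYleft : ∀ a ∈ Icc (0:ℝ) T, Function.leftLim Y a = Y a := by
    intro a ha
    rcases eq_or_lt_of_le ha.1 with h | h
    · -- a = 0
      subst h
      refine leftLim_eq_of_tendsto ?_
      have h0 : Y 0 = 0 := hY0 0 le_rfl
      rw [h0]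
      refine Tendsto.congr' ?_ tendsto_const_nhds
      filter_upwards [self_mem_nhdsWithin] with s hs
      exact (hY0 s (le_of_lt hs)).symm
    · -- 0 < a
      refine leftLim_eq_of_tendsto ?_
      have hYa : Y a = y a := hYy a ha
      rw [hYa]
      have h1 : Tendsto y (𝓝[Icc 0 T] a) (𝓝 (y a)) := hy_cont a ⟨ha.1, ha.2⟩
      have h2 : 𝓝[Ioo 0 a] a ≤ 𝓝[Icc 0 T] a :=
        nhdsWithin_mono a (fun s hs => ⟨hs.1.le, hs.2.le.trans ha.2⟩)
      have h3 : Tendsto Y (𝓝[Ioo 0 a] a) (𝓝 (y a)) := by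
        refine Tendsto.congr' ?_ (h1.mono_left h2)
        filter_upwards [self_mem_nhdsWithin] with s hs
        exact (hYy s ⟨hs.1.le, hs.2.le.trans ha.2⟩).symm
      rwa [nhdsWithin_Ioo_eq_nhdsLT h] at h3
  have hsingleton : ∀ a ∈ Icc (0:ℝ) T, μ {a} = 0 := by
    intro a ha
    rw [hμ, Y.measure_singleton, hYleft a ha, sub_self, ENNReal.ofReal_zero]
  have hIoc : ∀ a ∈ Icc (0:ℝ) T, ∀ b ∈ Icc (0:ℝ) T, y a = y b → μ (Ioc a b) = 0 := by
    intro a ha b hb hyab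
    rw [hμ, Y.measure_Ioc, hYy a ha, hYy b hb, hyab, sub_self, ENNReal.ofReal_zero]
  -- the open set where x > 0 inside (0,t)
  set U : Set ℝ := {s : ℝ | s ∈ Ioo 0 t ∧ 0 < x s} with hU
  have htT : t ≤ T := ht.2
  have hUopen : IsOpen U := by
    rw [isOpen_iff_mem_nhds]
    intro s hs
    have hsI : s ∈ Ioo (0:ℝ) t := hs.1
    have hmemT : Icc (0:ℝ) T ∈ 𝓝 s :=
      Icc_mem_nhds hsI.1 (lt_of_lt_of_le hsI.2 htT)
    have hcx : ContinuousAt x s := by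
      have hxc : ContinuousOn x (Icc 0 T) := by
        have : ContinuousOn (fun u => z u + y u) (Icc 0 T) := hz_cont.add hy_cont
        exact this.congr fun u _ => hx u
      exact hxc.continuousAt hmemT
    have he1 : ∀ᶠ u in 𝓝 s, 0 < x u := hcx.eventually (eventually_gt_nhds hs.2)
    have he2 : ∀ᶠ u in 𝓝 s, u ∈ Ioo (0:ℝ) t := isOpen_Ioo.mem_nhds hsI
    filter_upwards [he1, he2] with u h1 h2
    exact ⟨h2, h1⟩
  have hUnull : μ U = 0 := by
    by_contra hne
    obtain ⟨K, hKU, hKc, hKpos⟩ := hUopen.exists_lt_isCompact (pos_iff_ne_zero.2 hne)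
    have hKnull : μ K = 0 := by
      -- for each s ∈ K choose ε with Icc (s-ε) (s+ε) ⊆ U
      have hchoice : ∀ s ∈ K, ∃ ε > (0:ℝ), Icc (s - ε) (s + ε) ⊆ U := by
        intro s hsK
        obtain ⟨r, hr, hball⟩ := Metric.isOpen_iff.1 hUopen s (hKU hsK)
        refine ⟨r/2, by linarith, ?_⟩
        intro u hu
        apply hball
        rw [Real.ball_eq_Ioo]
        constructor <;> [linarith [hu.1]; linarith [hu.2]]
      choose! ε hε hεU using hchoice
      have hcover : K ⊆ ⋃ s ∈ K, Ioo (s - ε s) (s + ε s) := by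
        intro s hsK
        exact mem_biUnion hsK ⟨by linarith [hε s hsK], by linarith [hε s hsK]⟩
      obtain ⟨F, hFK, hFfin, hFcover⟩ :=
        hKc.elim_finite_subcover_image (fun s hsK => isOpen_Ioo) hcover
      have hIoo_null : ∀ s ∈ F, μ (Ioo (s - ε s) (s + ε s)) = 0 := by
        intro s hsF
        have hsK := hFK hsF
        have hsub : Icc (s - ε s) (s + ε s) ⊆ U := hεU s hsK
        have hεs := hε s hsK
        have ha : s - ε s ∈ Icc (0:ℝ) T := by
          have := hsub ⟨le_rfl, by linarith⟩
          exact ⟨(this.1.1).le, this.1.2.le.trans htT⟩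
        have hb : s + ε s ∈ Icc (0:ℝ) T := by
          have := hsub ⟨by linarith, le_rfl⟩
          exact ⟨(this.1.1).le, this.1.2.le.trans htT⟩
        have hyc : y (s - ε s) = y (s + ε s) := by
          refine hconst _ ha _ hb (by linarith) ?_
          intro u hu
          exact (hsub hu).2
        have := hIoc _ ha _ hb hyc
        exact measure_mono_null Ioo_subset_Ioc_self this
      have : μ K ≤ ∑ s ∈ hFfin.toFinset, μ (Ioo (s - ε s) (s + ε s)) := by
        refine le_trans (measure_mono ?_) (measure_biUnion_finset_le _ _)
        intro u hu
        have := hFcover hu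
        simp only [mem_iUnion, Set.Finite.mem_toFinset] at this ⊢
        obtain ⟨i, hiF, hi⟩ := this
        exact ⟨i, hiF, hi⟩
      rw [Finset.sum_eq_zero (fun s hs => hIoo_null s (hFfin.mem_toFinset.1 hs))] at this
      exact le_antisymm this (zero_le)
    exact hKpos.ne' hKnull
  -- conclude: x = 0 a.e. with respect to μ restricted to [0, t]
  have hae : ∀ᵐ s ∂μ.restrict (Icc 0 t), x s = 0 := by
    rw [ae_iff, Measure.restrict_apply' measurableSet_Icc]
    refine measure_mono_null ?_ (measure_union_null (measure_union_null
      (hsingleton 0 ⟨le_rfl, hT.le⟩) (hsingleton t ht)) hUnull)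
    · intro s hs
      have hs1 : ¬ x s = 0 := hs.1
      have hs2 : s ∈ Icc 0 t := hs.2
      have hpos : 0 < x s :=
        lt_of_le_of_ne (hx_nonneg s ⟨hs2.1, hs2.2.trans htT⟩) (Ne.symm hs1)
      rcases eq_or_lt_of_le hs2.1 with h0 | h0
      · exact Or.inl (Or.inl h0.symm)
      · rcases eq_or_lt_of_le hs2.2 with h1 | h1
        · exact Or.inl (Or.inr h1)
        · exact Or.inr ⟨⟨h0, h1⟩, hpos⟩
  calc ∫ s in Icc (0:ℝ) t, x s ∂μ = ∫ s in Icc (0:ℝ) t, (0:ℝ) ∂μ :=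
        integral_congr_ae hae
    _ = 0 := integral_zero _ _
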